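/- arXiv:1010.0716 — 4 statements merged into one kernel-verified Lean document; each statement's English description precedes it below -/
import Mathlib

section
/- Let S be a finite left regular band with identity, L its lattice of principal left ideals, σ : S → L the support map, k a field, w = Σ_{t∈S} w_t t ∈ kS, and λ_X = Σ_{σ(t)≥X} w_t for X ∈ L. Assume X > Y implies λ_X ≠ λ_Y. For X ∈ L define p_X(z) = Π_{λ ∈ {λ_Y : Y ≤ X}} (z − λ). Then for every s ∈ S, s · p_{σ(s)}(w) = 0 in kS. -/
def leftIdeal {S : Type*} [Monoid S] (s : S) : Set S := {x | ∃ u, x = u * s}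

section
variable {S : Type*} [Monoid S]

lemma mem_leftIdeal_self (s : S) : s ∈ leftIdeal s := ⟨1, (one_mul s).symm⟩

lemma leftIdeal_subset_iff (idem : ∀ x : S, x * x = x) {t s : S} :
    leftIdeal t ⊆ leftIdeal s ↔ t * s = t := by
  constructor
  · intro h
    obtain ⟨u, hu⟩ := h (mem_leftIdeal_self t)
    rw [hu, mul_assoc, idem]
  · rintro h x ⟨u, rfl⟩
    exact ⟨u * t, by rw [mul_assoc, h]⟩
end

open Polynomial in
open Classical in
lemma key_lrb {S : Type*} [Monoid S] [Fintype S]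
    (idem : ∀ x : S, x * x = x) (lrb : ∀ x y : S, x * y * x = x * y)
    {k : Type*} [Field k] (c : S → k)
    (lam : S → k)
    (hlam : ∀ x : S,
      lam x = ∑ t ∈ Finset.univ.filter (fun t : S => leftIdeal x ⊆ leftIdeal t), c t)
    (hdist : ∀ x y : S, leftIdeal y ⊂ leftIdeal x → lam x ≠ lam y) :
    ∀ (n : ℕ) (s : S),
      (Finset.univ.filter (fun t : S => leftIdeal t ⊆ leftIdeal s)).card ≤ n →
      MonoidAlgebra.single s (1 : k) *
        Polynomial.aeval (∑ t : S, MonoidAlgebra.single t (c t))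
          (∏ μ ∈ (Finset.univ.filter
            (fun y : S => leftIdeal y ⊆ leftIdeal s)).image lam, (X - C μ)) = 0 := by
  intro n
  induction n with
  | zero =>
    intro s hs
    exfalso
    have : 0 < (Finset.univ.filter (fun t : S => leftIdeal t ⊆ leftIdeal s)).card :=
      Finset.card_pos.mpr ⟨s, Finset.mem_filter.mpr ⟨Finset.mem_univ s, subset_rfl⟩⟩
    omega
  | succ n ih =>
    intro s hs
    set w : MonoidAlgebra k S := ∑ t : S, MonoidAlgebra.single t (c t) with hw
    set F : S → Finset S :=
      fun x => Finset.univ.filter (fun t : S => leftIdeal t ⊆ leftIdeal x) with hF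
    set E : Finset k := (Finset.univ.filter
      (fun y : S => leftIdeal y ⊆ leftIdeal s)).image lam with hE
    -- lam s ∈ E
    have hlamsE : lam s ∈ E := by
      refine Finset.mem_image.mpr ⟨s, ?_, rfl⟩
      exact Finset.mem_filter.mpr ⟨Finset.mem_univ s, subset_rfl⟩
    -- step 1 : s * (w - lam s) = sum over bad t
    have step1 : MonoidAlgebra.single s (1 : k) * (w - algebraMap k _ (lam s)) =
        ∑ t ∈ Finset.univ.filter (fun t : S => ¬ s * t = s),
          MonoidAlgebra.single (s * t) (c t) := by
      have h1 : MonoidAlgebra.single s (1 : k) * w =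
          ∑ t : S, MonoidAlgebra.single (s * t) (c t) := by
        rw [hw, Finset.mul_sum]
        exact Finset.sum_congr rfl fun t _ => by
          rw [MonoidAlgebra.single_mul_single, one_mul]
      have h2 : MonoidAlgebra.single s (1 : k) * (algebraMap k (MonoidAlgebra k S) (lam s)) =
          MonoidAlgebra.single s (lam s) := by
        rw [Algebra.algebraMap_eq_smul_one, MonoidAlgebra.one_def,
          MonoidAlgebra.smul_single', mul_one, MonoidAlgebra.single_mul_single,
          mul_one, one_mul]
      have h3 : (∑ t ∈ Finset.univ.filter (fun t : S => s * t = s),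
          MonoidAlgebra.single (s * t) (c t)) = MonoidAlgebra.single s (lam s) := by
        have : (∑ t ∈ Finset.univ.filter (fun t : S => s * t = s),
            MonoidAlgebra.single (s * t) (c t)) =
            ∑ t ∈ Finset.univ.filter (fun t : S => s * t = s),
              MonoidAlgebra.single s (c t) := by
          refine Finset.sum_congr rfl fun t ht => by
            rw [(Finset.mem_filter.mp ht).2]
        rw [this, show ∀ (u : Finset S), ∑ t ∈ u, MonoidAlgebra.single s (c t) = MonoidAlgebra.single s (∑ t ∈ u, c t) from fun u => (map_sum (MonoidAlgebra.singleAddHom s) c u).symm]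
        congr 1
        rw [hlam s]
        refine (Finset.sum_congr ?_ fun _ _ => rfl).symm
        refine Finset.filter_congr fun t _ => ?_
        rw [leftIdeal_subset_iff idem]
      rw [mul_sub, h1, h2,
        ← Finset.sum_filter_add_sum_filter_not Finset.univ (fun t : S => s * t = s)
          (fun t => MonoidAlgebra.single (s * t) (c t)), h3]
      abel
    -- split the polynomial
    have hsplit : (∏ μ ∈ E, (X - C μ) : k[X]) =
        (X - C (lam s)) * ∏ μ ∈ E.erase (lam s), (X - C μ) :=
      (Finset.mul_prod_erase E _ hlamsE).symm
    rw [hsplit, map_mul, map_sub, aeval_X, aeval_C, ← mul_assoc, step1,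
      Finset.sum_mul]
    refine Finset.sum_eq_zero fun t ht => ?_
    have hts : ¬ s * t = s := (Finset.mem_filter.mp ht).2
    -- properties of s' = s * t
    set s' : S := s * t with hs'
    have hsub : leftIdeal s' ⊆ leftIdeal s :=
      (leftIdeal_subset_iff idem).mpr (lrb s t)
    have hnsub : ¬ leftIdeal s ⊆ leftIdeal s' := by
      intro h
      have := (leftIdeal_subset_iff idem).mp h
      rw [hs', ← mul_assoc, idem] at this
      exact hts this
    -- E' ⊆ E.erase (lam s)
    set E' : Finset k := (Finset.univ.filter
      (fun y : S => leftIdeal y ⊆ leftIdeal s')).image lam with hE'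
    have hE'sub : E' ⊆ E.erase (lam s) := by
      intro μ hμ
      obtain ⟨y, hy, rfl⟩ := Finset.mem_image.mp hμ
      have hy' : leftIdeal y ⊆ leftIdeal s' := (Finset.mem_filter.mp hy).2
      refine Finset.mem_erase.mpr ⟨?_, ?_⟩
      · have : leftIdeal y ⊂ leftIdeal s :=
          ⟨hy'.trans hsub, fun h => hnsub (h.trans hy')⟩
        exact fun h => hdist s y this h.symm
      · exact Finset.mem_image.mpr ⟨y, Finset.mem_filter.mpr
          ⟨Finset.mem_univ y, hy'.trans hsub⟩, rfl⟩
    -- cardinality decreases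
    have hcard : (F s').card ≤ n := by
      have hss : F s' ⊂ F s := by
        refine Finset.ssubset_iff_of_subset ?_ |>.mpr ⟨s, ?_, ?_⟩
        · intro a ha
          exact Finset.mem_filter.mpr ⟨Finset.mem_univ a,
            ((Finset.mem_filter.mp ha).2).trans hsub⟩
        · exact Finset.mem_filter.mpr ⟨Finset.mem_univ s, subset_rfl⟩
        · intro h
          exact hnsub (Finset.mem_filter.mp h).2
      have := Finset.card_lt_card hss
      have h2 : (F s).card ≤ n + 1 := hs
      omega
    have ihs' := ih s' hcard
    -- decompose the erased product
    have hprod : (∏ μ ∈ E.erase (lam s), (X - C μ) : k[X]) =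
        (∏ μ ∈ E', (X - C μ)) * ∏ μ ∈ (E.erase (lam s)) \ E', (X - C μ) := by
      rw [mul_comm, Finset.prod_sdiff hE'sub]
    rw [hprod, map_mul]
    have : MonoidAlgebra.single s' (c t) =
        c t • MonoidAlgebra.single s' (1 : k) := by
      rw [MonoidAlgebra.smul_single', mul_one]
    rw [this, smul_mul_assoc, ← mul_assoc, ihs', zero_mul, smul_zero]

open Polynomial in
open Classical in
theorem stmt_4 {S : Type*} [Monoid S] [Fintype S]
    (idem : ∀ x : S, x * x = x) (lrb : ∀ x y : S, x * y * x = x * y)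
    (k : Type*) [Field k] (c : S → k)
    (w : MonoidAlgebra k S) (hw : w = ∑ t : S, MonoidAlgebra.single t (c t))
    (lam : S → k)
    (hlam : ∀ x : S,
      lam x = ∑ t ∈ Finset.univ.filter (fun t : S => leftIdeal x ⊆ leftIdeal t), c t)
    (hdist : ∀ x y : S, leftIdeal y ⊂ leftIdeal x → lam x ≠ lam y)
    (s : S)
    (p : k[X])
    (hp : p = ∏ μ ∈ (Finset.univ.filter
        (fun y : S => leftIdeal y ⊆ leftIdeal s)).image lam, (X - C μ)) :
    MonoidAlgebra.single s (1 : k) * Polynomial.aeval w p = 0 := by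
  rw [hw, hp]
  exact key_lrb idem lrb c lam hlam hdist _ s le_rfl
end

section
/- Let S be a finite left regular band with identity, L its lattice of principal left ideals, σ the support map, k a field, w = Σ_{t∈S} w_t t ∈ kS, and λ_X = Σ_{σ(t)≥X} w_t. If λ₁, …, λ_k are the distinct elements of {λ_X : X ∈ L} and X > Y implies λ_X ≠ λ_Y, then Π_{i=1}^{k} (w − λᵢ) = 0 in kS. -/
set_option linter.unusedSectionVars false
set_option maxHeartbeats 1000000

namespace LRBProof

open Polynomial Finset

variable {S : Type*} [Monoid S]

theorem li_sub_iff (idem : ∀ x : S, x * x = x) {x y : S} :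
    leftIdeal x ⊆ leftIdeal y ↔ x * y = x := by
  constructor
  · intro h
    obtain ⟨u, hu⟩ := h ⟨x, (idem x).symm⟩
    rw [hu, mul_assoc, idem y, ← hu]
  · rintro h v ⟨u, rfl⟩
    exact ⟨u * x, by rw [mul_assoc, h]⟩

theorem li_ssub_iff (idem : ∀ x : S, x * x = x) {x y : S} :
    leftIdeal y ⊂ leftIdeal x ↔ y * x = y ∧ ¬ x * y = x := by
  rw [ssubset_iff_subset_not_subset, li_sub_iff idem, li_sub_iff idem]

theorem mul_split_right (idem : ∀ x : S, x * x = x) {x a b : S}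
    (h : x * (a * b) = x) : x * b = x := by
  conv_lhs => rw [← h]
  rw [mul_assoc x (a * b) b, mul_assoc a b b, idem b, h]

theorem mul_split_left (lrb : ∀ x y : S, x * y * x = x * y) {x a b : S}
    (h : x * (a * b) = x) : x * a = x := by
  conv_lhs => rw [← h]
  rw [mul_assoc x (a * b) a, lrb a b, h]

theorem listprod_absorb (lrb : ∀ x y : S, x * y * x = x * y) :
    ∀ (l : List S) {t : S}, t ∈ l → l.prod * t = l.prod := by
  intro l
  induction l with
  | nil => intro t ht; simp at ht
  | cons a l ih =>
    intro t ht
    rw [List.prod_cons]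
    rcases List.mem_cons.mp ht with rfl | h
    · exact lrb _ l.prod
    · rw [mul_assoc, ih h]

section Sums

theorem sum_subtype_univ_of_zero {α : Type*} [Fintype α] {N : Type*} [AddCommMonoid N]
    (p : α → Prop) [DecidablePred p] [Fintype (Subtype p)]
    (g : α → N) (h0 : ∀ a, ¬ p a → g a = 0) :
    ∑ a : α, g a = ∑ a : Subtype p, g a.val := by
  have h1 : ∑ a ∈ Finset.univ.filter p, g a = ∑ a : α, g a :=
    Finset.sum_subset (Finset.filter_subset _ _)
      (fun x _ hx => h0 x (by simpa using hx))
  rw [← h1]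
  exact Finset.sum_subtype _ (by simp) g

theorem filter_sum_subtype {α : Type*} [Fintype α] {N : Type*} [AddCommMonoid N]
    (p : α → Prop) [DecidablePred p] [Fintype (Subtype p)]
    (cond : α → Prop) [DecidablePred cond] (himp : ∀ a, cond a → p a) (f : α → N) :
    ∑ t' ∈ Finset.univ.filter (fun t' : Subtype p => cond t'.val), f t'.val
      = ∑ t ∈ Finset.univ.filter cond, f t := by
  rw [Finset.sum_filter, Finset.sum_filter]
  exact (sum_subtype_univ_of_zero p (fun t => if cond t then f t else 0)
    (fun a ha => if_neg (fun hc => ha (himp a hc)))).symm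

end Sums

section MA
variable [Fintype S] {k : Type*} [Field k]

theorem ma_decomp (V : MonoidAlgebra k S) :
    ∑ t : S, MonoidAlgebra.single t (V.coeff t) = V := by
  ext a
  rw [MonoidAlgebra.coeff_sum, Finset.sum_apply']
  simp only [MonoidAlgebra.coeff_single]
  rw [Finset.sum_eq_single a (fun b _ hb => Finsupp.single_eq_of_ne' hb)
      (fun h => absurd (Finset.mem_univ a) h)]
  exact Finsupp.single_eq_same

theorem single_mul_decomp (s : S) (r : k) (V : MonoidAlgebra k S) :
    MonoidAlgebra.single s r * V = ∑ t : S, MonoidAlgebra.single (s * t) (r * V.coeff t) := by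
  conv_lhs => rw [← ma_decomp V]
  rw [Finset.mul_sum]
  exact Finset.sum_congr rfl fun t _ => MonoidAlgebra.single_mul_single ..

theorem mul_single_decomp (V : MonoidAlgebra k S) (s : S) (r : k) :
    V * MonoidAlgebra.single s r = ∑ t : S, MonoidAlgebra.single (t * s) (V.coeff t * r) := by
  conv_lhs => rw [← ma_decomp V]
  rw [Finset.sum_mul]
  exact Finset.sum_congr rfl fun t _ => MonoidAlgebra.single_mul_single ..

theorem single_of_sum {β : Type*} (s : Finset β) (a : S) (f : β → k) :
    ∑ i ∈ s, MonoidAlgebra.single a (f i) = MonoidAlgebra.single a (∑ i ∈ s, f i) :=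
  (map_sum (MonoidAlgebra.singleAddHom a) f s).symm

end MA

end LRBProof

namespace LRBProof
open Polynomial Finset

universe u v

open Classical in
theorem aux : ∀ (n : ℕ) (S : Type u) [Monoid S] [Fintype S]
    (idem : ∀ x : S, x * x = x) (lrb : ∀ x y : S, x * y * x = x * y)
    (k : Type v) [Field k] (c : S → k) (lam : S → k)
    (_hlam : ∀ x : S,
      lam x = ∑ t ∈ Finset.univ.filter (fun t : S => leftIdeal x ⊆ leftIdeal t), c t)
    (_hdist : ∀ x y : S, leftIdeal y ⊂ leftIdeal x → lam x ≠ lam y),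
    Fintype.card S ≤ n →
    Polynomial.aeval (∑ t : S, MonoidAlgebra.single t (c t))
      (∏ μ ∈ Finset.univ.image lam, (X - C μ)) = 0 := by
  intro n
  induction n with
  | zero =>
    intro S _ _ _ _ k _ c lam _ _ hcard
    haveI : Nonempty S := ⟨1⟩
    have h := Fintype.card_pos (α := S)
    omega
  | succ n ih =>
    intro S instM instF idem lrb k instK c lam hlam hdist hcard
    set w : MonoidAlgebra k S := ∑ t : S, MonoidAlgebra.single t (c t) with hw
    -- the global minimum element
    set z : S := (Finset.univ.toList (α := S)).prod with hzdef
    have hz : ∀ t : S, z * t = z := fun t =>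
      listprod_absorb lrb _ (Finset.mem_toList.mpr (Finset.mem_univ t))
    have bot_mul : ∀ {s : S}, s * z = s → ∀ t : S, s * t = s := by
      intro s hs t
      conv_lhs => rw [← hs, mul_assoc, hz t]
      exact hs
    have hsum_c : lam z = ∑ s : S, c s := by
      rw [hlam z, Finset.filter_true_of_mem (fun t _ => (li_sub_iff idem).mpr (hz t))]
    -- truncation homomorphisms kill everything above the bottom layer
    have key : ∀ (E : Finset k),
        (∀ x₀ : S, ¬ x₀ * z = x₀ → ∀ t : S, x₀ * t = x₀ → lam t ∈ E) →
        ∀ t₁ : S, ¬ t₁ * z = t₁ →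
        (Polynomial.aeval w (∏ μ ∈ E, (X - C μ)) : MonoidAlgebra k S).coeff t₁ = 0 := by
      intro E hE t₁ ht₁
      letI instMonT : Monoid {t : S // t₁ * t = t₁} :=
        { mul := fun a b => ⟨a.val * b.val, by rw [← mul_assoc, a.prop, b.prop]⟩
          one := ⟨1, mul_one t₁⟩
          mul_assoc := fun a b c => Subtype.ext (mul_assoc a.val b.val c.val)
          one_mul := fun a => Subtype.ext (one_mul a.val)
          mul_one := fun a => Subtype.ext (mul_one a.val) }
      have idem' : ∀ a : {t : S // t₁ * t = t₁}, a * a = a := fun a => Subtype.ext (idem a.val)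
      have lrb' : ∀ a b : {t : S // t₁ * t = t₁}, a * b * a = a * b :=
        fun a b => Subtype.ext (lrb a.val b.val)
      have hcardT : Fintype.card {t : S // t₁ * t = t₁} ≤ n := by
        have hlt : Fintype.card {t : S // t₁ * t = t₁} < Fintype.card S :=
          Fintype.card_subtype_lt (x := z) ht₁
        omega
      -- transfer of hypotheses
      have himp : ∀ (x' : {t : S // t₁ * t = t₁}) (t : S),
          leftIdeal (x' : S) ⊆ leftIdeal t → t₁ * t = t₁ := by
        intro x' t hc
        have hxt : (x' : S) * t = (x' : S) := (li_sub_iff idem).mp hc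
        have h1 : t₁ * t = t₁ * ((x' : S) * t) := by
          rw [← mul_assoc, x'.prop]
        rw [h1, hxt, x'.prop]
      have li_bridge : ∀ a b : {t : S // t₁ * t = t₁},
          (leftIdeal a ⊆ leftIdeal b ↔ leftIdeal (a : S) ⊆ leftIdeal (b : S)) := by
        intro a b
        rw [li_sub_iff idem', li_sub_iff idem]
        exact ⟨fun h => congrArg Subtype.val h, fun h => Subtype.ext h⟩
      have hlam' : ∀ x' : {t : S // t₁ * t = t₁},
          lam (x' : S) = ∑ t' ∈ Finset.univ.filter
            (fun t' : {t : S // t₁ * t = t₁} => leftIdeal x' ⊆ leftIdeal t'), c (t' : S) := by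
        intro x'
        rw [hlam (x' : S)]
        rw [show (Finset.univ.filter
              (fun t' : {t : S // t₁ * t = t₁} => leftIdeal x' ⊆ leftIdeal t'))
            = Finset.univ.filter
              (fun t' : {t : S // t₁ * t = t₁} => leftIdeal (x' : S) ⊆ leftIdeal (t' : S)) from
          Finset.filter_congr (fun t' _ => by rw [li_bridge])]
        exact (filter_sum_subtype (fun t : S => t₁ * t = t₁)
          (fun t : S => leftIdeal (x' : S) ⊆ leftIdeal t) (himp x') c).symm
      have hdist' : ∀ x' y' : {t : S // t₁ * t = t₁},
          leftIdeal y' ⊂ leftIdeal x' → lam (x' : S) ≠ lam (y' : S) := by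
        intro x' y' hss
        rw [li_ssub_iff idem'] at hss
        refine hdist (x' : S) (y' : S) ((li_ssub_iff idem).mpr ⟨?_, ?_⟩)
        · exact congrArg Subtype.val hss.1
        · exact fun h => hss.2 (Subtype.ext h)
      -- the truncation algebra homomorphism
      let φ : S →* MonoidAlgebra k {t : S // t₁ * t = t₁} :=
        { toFun := fun t =>
            if h : t₁ * t = t₁ then
              MonoidAlgebra.single (⟨t, h⟩ : {t : S // t₁ * t = t₁}) (1 : k) else 0
          map_one' := by
            show (if h : t₁ * (1 : S) = t₁ then
                MonoidAlgebra.single (⟨(1 : S), h⟩ : {t : S // t₁ * t = t₁}) (1 : k) else 0) = 1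
            rw [dif_pos (mul_one t₁)]; rfl
          map_mul' := fun a b => by
            show (if h : t₁ * (a * b) = t₁ then
                MonoidAlgebra.single (⟨a * b, h⟩ : {t : S // t₁ * t = t₁}) (1 : k) else 0)
              = (if h : t₁ * a = t₁ then
                  MonoidAlgebra.single (⟨a, h⟩ : {t : S // t₁ * t = t₁}) (1 : k) else 0)
                * (if h : t₁ * b = t₁ then
                  MonoidAlgebra.single (⟨b, h⟩ : {t : S // t₁ * t = t₁}) (1 : k) else 0)
            by_cases ha : t₁ * a = t₁
            · by_cases hb : t₁ * b = t₁
              · have hab : t₁ * (a * b) = t₁ := by rw [← mul_assoc, ha, hb]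
                rw [dif_pos hab, dif_pos ha, dif_pos hb,
                  MonoidAlgebra.single_mul_single, one_mul]
                rfl
              · rw [dif_neg (fun h => hb (mul_split_right idem h)), dif_neg hb, mul_zero]
            · rw [dif_neg (fun h => ha (mul_split_left lrb h)), dif_neg ha, zero_mul] }
      have hφ : ∀ t : S, φ t = (if h : t₁ * t = t₁ then
          MonoidAlgebra.single (⟨t, h⟩ : {t : S // t₁ * t = t₁}) (1 : k) else 0) :=
        fun t => rfl
      let π : MonoidAlgebra k S →ₐ[k] MonoidAlgebra k {t : S // t₁ * t = t₁} :=
        (MonoidAlgebra.lift k (MonoidAlgebra k {t : S // t₁ * t = t₁}) S) φ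
      have hπs : ∀ (t : S) (r : k), π (MonoidAlgebra.single t r) = r • φ t :=
        fun t r => MonoidAlgebra.lift_single φ t r
      -- coefficient extraction
      have hcoeff : ∀ (V : MonoidAlgebra k S) (b : {t : S // t₁ * t = t₁}),
          (π V).coeff b = V.coeff b.val := by
        intro V b
        conv_lhs => rw [← ma_decomp V]
        rw [map_sum, MonoidAlgebra.coeff_sum, Finset.sum_apply']
        rw [Finset.sum_eq_single b.val ?_ ?_]
        · rw [hπs, hφ b.val, dif_pos b.prop, Subtype.coe_eta]
          rw [MonoidAlgebra.smul_single, MonoidAlgebra.coeff_single, Finsupp.single_eq_same, smul_eq_mul, mul_one]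
        · intro t _ hne
          rw [hπs, hφ t]
          by_cases h : t₁ * t = t₁
          · rw [dif_pos h, MonoidAlgebra.smul_single, MonoidAlgebra.coeff_single]
            have hneq : (⟨t, h⟩ : {t : S // t₁ * t = t₁}) ≠ b :=
              fun he => hne (congrArg Subtype.val he)
            rw [Finsupp.single_eq_of_ne' hneq]
          · rw [dif_neg h, smul_zero, MonoidAlgebra.coeff_zero, Finsupp.coe_zero, Pi.zero_apply]
        · intro hb; exact absurd (Finset.mem_univ b.val) hb
      -- π w is the walk element of the smaller monoid
      have hπw : π w = ∑ t' : {t : S // t₁ * t = t₁}, MonoidAlgebra.single t' (c (t' : S)) := by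
        rw [hw, map_sum]
        have h1 : ∀ t : S, π (MonoidAlgebra.single t (c t))
            = (if h : t₁ * t = t₁ then
                MonoidAlgebra.single (⟨t, h⟩ : {t : S // t₁ * t = t₁}) (c t) else 0) := by
          intro t
          rw [hπs, hφ t]
          by_cases h : t₁ * t = t₁
          · rw [dif_pos h, dif_pos h, MonoidAlgebra.smul_single, smul_eq_mul, mul_one]
          · rw [dif_neg h, dif_neg h, smul_zero]
        rw [Finset.sum_congr rfl (fun t _ => h1 t)]
        rw [sum_subtype_univ_of_zero (fun t : S => t₁ * t = t₁)
          (fun t => if h : t₁ * t = t₁ then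
            MonoidAlgebra.single (⟨t, h⟩ : {t : S // t₁ * t = t₁}) (c t) else 0)
          (fun a ha => dif_neg ha)]
        refine Finset.sum_congr rfl fun t' _ => ?_
        rw [dif_pos t'.prop, Subtype.coe_eta]
      -- apply the inductive hypothesis
      have hIH := ih {t : S // t₁ * t = t₁} idem' lrb' k (fun t' => c (t' : S))
        (fun t' => lam (t' : S)) hlam' hdist' hcardT
      have hsub : (Finset.univ.image (fun t' : {t : S // t₁ * t = t₁} => lam (t' : S))) ⊆ E := by
        intro μ hμ
        obtain ⟨t', _, rfl⟩ := Finset.mem_image.mp hμ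
        exact hE t₁ ht₁ t'.val t'.prop
      have hπ0 : π (Polynomial.aeval w (∏ μ ∈ E, (X - C μ))) = 0 := by
        rw [← Polynomial.aeval_algHom_apply, hπw]
        rw [show (∏ μ ∈ E, (X - C μ) : Polynomial k)
            = (∏ μ ∈ E \ (Finset.univ.image
                (fun t' : {t : S // t₁ * t = t₁} => lam (t' : S))), (X - C μ))
              * (∏ μ ∈ Finset.univ.image
                (fun t' : {t : S // t₁ * t = t₁} => lam (t' : S)), (X - C μ)) from
          (Finset.prod_sdiff hsub).symm]
        rw [map_mul, hIH, mul_zero]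
      have hfin := hcoeff (Polynomial.aeval w (∏ μ ∈ E, (X - C μ))) ⟨t₁, idem t₁⟩
      rw [hπ0] at hfin
      simpa using hfin.symm
    -- the element to be shown zero
    set N : MonoidAlgebra k S :=
      Polynomial.aeval w (∏ μ ∈ Finset.univ.image lam, (X - C μ)) with hN
    have botN : ∀ t : S, ¬ t * z = t → N.coeff t = 0 := by
      intro t ht
      have h := key (Finset.univ.image lam)
        (fun x₀ _ t' _ => Finset.mem_image_of_mem lam (Finset.mem_univ t')) t ht
      rw [← hN] at h
      exact h
    set D : Finset k := (Finset.univ.filter (fun t : S => ¬ t * z = t)).image lam with hD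
    set H : MonoidAlgebra k S := Polynomial.aeval w (∏ μ ∈ D, (X - C μ)) with hH
    have botH : ∀ t : S, ¬ t * z = t → H.coeff t = 0 := by
      intro t ht
      have h := key D ?_ t ht
      · rw [← hH] at h; exact h
      · intro x₀ hx₀ t' hmem
        refine Finset.mem_image_of_mem lam (Finset.mem_filter.mpr ⟨Finset.mem_univ t', ?_⟩)
        intro htz
        apply hx₀
        calc x₀ * z = (x₀ * t') * z := by rw [hmem]
          _ = x₀ * (t' * z) := mul_assoc _ _ _
          _ = x₀ * t' := by rw [htz]
          _ = x₀ := hmem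
    -- the augmentation map
    have hε_single : ∀ (t : S) (r : k),
        (MonoidAlgebra.lift k k S) 1 (MonoidAlgebra.single t r) = r := by
      intro t r
      rw [MonoidAlgebra.lift_single]
      simp
    have hεw : (MonoidAlgebra.lift k k S) 1 w = lam z := by
      rw [hw, map_sum]
      simp only [hε_single]
      exact hsum_c.symm
    have hεN : (MonoidAlgebra.lift k k S) 1 N = 0 := by
      rw [hN, ← Polynomial.aeval_algHom_apply, hεw, map_prod]
      refine Finset.prod_eq_zero (Finset.mem_image_of_mem lam (Finset.mem_univ z)) ?_
      rw [map_sub, Polynomial.aeval_X, Polynomial.aeval_C]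
      simp
    have sumN : ∑ t : S, N.coeff t = 0 := by
      have h : (MonoidAlgebra.lift k k S) 1 N = ∑ t : S, N.coeff t := by
        conv_lhs => rw [← ma_decomp N]
        rw [map_sum]
        simp only [hε_single]
      rw [← h, hεN]
    -- N is a right eigenvector
    have hNw : N * w = lam z • N := by
      rw [hw, Finset.mul_sum]
      have h1 : ∀ s : S, N * MonoidAlgebra.single s (c s)
          = ∑ t : S, MonoidAlgebra.single t (N.coeff t * c s) := by
        intro s
        rw [mul_single_decomp]
        refine Finset.sum_congr rfl fun t _ => ?_
        by_cases h : t * z = t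
        · rw [bot_mul h s]
        · rw [botN t h, zero_mul, MonoidAlgebra.single_zero, MonoidAlgebra.single_zero]
      rw [Finset.sum_congr rfl fun s _ => h1 s, Finset.sum_comm]
      have h2 : ∀ t : S, ∑ s : S, MonoidAlgebra.single t (N.coeff t * c s)
          = MonoidAlgebra.single t (lam z * N.coeff t) := by
        intro t
        rw [single_of_sum, ← Finset.mul_sum, ← hsum_c, mul_comm]
      rw [Finset.sum_congr rfl fun t _ => h2 t]
      conv_rhs => rw [← ma_decomp N, Finset.smul_sum]
      refine Finset.sum_congr rfl fun t _ => ?_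
      rw [MonoidAlgebra.smul_single, smul_eq_mul]
    have hcomm : w * N = N * w := by
      have h1 : Polynomial.aeval w (X * (∏ μ ∈ Finset.univ.image lam, (X - C μ)))
          = Polynomial.aeval w ((∏ μ ∈ Finset.univ.image lam, (X - C μ)) * X) := by
        rw [mul_comm]
      rw [map_mul, map_mul, Polynomial.aeval_X] at h1
      rw [hN]
      exact h1
    have hwN : w * N = lam z • N := by rw [hcomm, hNw]
    have hpow : ∀ m : ℕ, w ^ m * N = lam z ^ m • N := by
      intro m
      induction m with
      | zero => simp
      | succ m ihm =>
        rw [pow_succ, mul_assoc, hwN, mul_smul_comm, ihm, smul_smul, ← pow_succ']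
    have haevalN : ∀ q : Polynomial k,
        Polynomial.aeval w q * N = q.eval (lam z) • N := by
      intro q
      induction q using Polynomial.induction_on' with
      | add p q hp hq => rw [map_add, add_mul, hp, hq, Polynomial.eval_add, add_smul]
      | monomial m a =>
        rw [Polynomial.aeval_monomial, Polynomial.eval_monomial, mul_assoc, hpow m,
          ← Algebra.smul_def, smul_smul]
    have hHN : H * N = 0 := by
      have hsingle : ∀ s : S, s * z = s → ∀ r : k,
          MonoidAlgebra.single s r * N = 0 := by
        intro s hs r
        rw [single_mul_decomp]
        have h1 : ∀ t : S, MonoidAlgebra.single (s * t) (r * N.coeff t)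
            = MonoidAlgebra.single s (r * N.coeff t) := fun t => by rw [bot_mul hs t]
        rw [Finset.sum_congr rfl fun t _ => h1 t, single_of_sum, ← Finset.mul_sum,
          sumN, mul_zero, MonoidAlgebra.single_zero]
      calc H * N = (∑ s : S, MonoidAlgebra.single s (H.coeff s)) * N := by rw [ma_decomp]
        _ = ∑ s : S, MonoidAlgebra.single s (H.coeff s) * N := by rw [Finset.sum_mul]
        _ = 0 := Finset.sum_eq_zero fun s _ => by
            by_cases hs : s * z = s
            · exact hsingle s hs (H.coeff s)
            · rw [botH s hs, MonoidAlgebra.single_zero, zero_mul]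
    have heval : ((∏ μ ∈ D, (X - C μ) : Polynomial k).eval (lam z)) • N = 0 := by
      rw [← haevalN, ← hH, hHN]
    have hne : ((∏ μ ∈ D, (X - C μ) : Polynomial k).eval (lam z)) ≠ 0 := by
      rw [Polynomial.eval_prod]
      refine Finset.prod_ne_zero_iff.mpr fun μ hμ => ?_
      rw [Polynomial.eval_sub, Polynomial.eval_X, Polynomial.eval_C]
      rw [hD] at hμ
      obtain ⟨t, htf, rfl⟩ := Finset.mem_image.mp hμ
      have ht : ¬ t * z = t := (Finset.mem_filter.mp htf).2
      have hlt : lam t ≠ lam z := hdist t z ((li_ssub_iff idem).mpr ⟨hz t, ht⟩)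
      exact sub_ne_zero_of_ne (Ne.symm hlt)
    have hfin : N = ((∏ μ ∈ D, (X - C μ) : Polynomial k).eval (lam z))⁻¹
        • (((∏ μ ∈ D, (X - C μ) : Polynomial k).eval (lam z)) • N) := by
      rw [smul_smul, inv_mul_cancel₀ hne, one_smul]
    rw [hfin, heval, smul_zero]



end LRBProof

open Polynomial in
open Classical in
theorem stmt_5 {S : Type*} [Monoid S] [Fintype S]
    (idem : ∀ x : S, x * x = x) (lrb : ∀ x y : S, x * y * x = x * y)
    (k : Type*) [Field k] (c : S → k)
    (w : MonoidAlgebra k S) (hw : w = ∑ t : S, MonoidAlgebra.single t (c t))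
    (lam : S → k)
    (hlam : ∀ x : S,
      lam x = ∑ t ∈ Finset.univ.filter (fun t : S => leftIdeal x ⊆ leftIdeal t), c t)
    (hdist : ∀ x y : S, leftIdeal y ⊂ leftIdeal x → lam x ≠ lam y) :
    Polynomial.aeval w (∏ μ ∈ Finset.univ.image lam, (X - C μ)) = 0 := by
  subst hw
  exact LRBProof.aux (Fintype.card S) S idem lrb k c lam hlam hdist le_rfl
end

section
/- Let S be a finite left regular band with identity and w ∈ ℝS a probability measure on S. Then the subalgebra ℝ[w] of ℝS generated by w is semisimple; in fact the minimal polynomial of w over ℝ has distinct real roots. -/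
open Polynomial Finset

noncomputable section LRBAux

open scoped Classical

variable {S : Type*} [Monoid S] [Fintype S]

def lrbLam (c : S → ℝ) (y : S) : ℝ := ∑ t ∈ univ.filter (fun t => y * t = y), c t

def lrbLamSet (c : S → ℝ) (y : S) : Finset ℝ :=
  (univ.filter (fun z : S => z * y = z)).image (lrbLam c)

def lrbPoly (c : S → ℝ) (y : S) : ℝ[X] := ∏ l ∈ lrbLamSet c y, (X - C l)

omit [Fintype S] in
theorem lrb_trans {x y z : S} (h1 : z * y = z) (h2 : x * z = x) : x * y = x := by
  calc x * y = x * z * y := by rw [h2]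
    _ = x * (z * y) := by rw [mul_assoc]
    _ = x := by rw [h1, h2]

theorem lrbLam_mono (c : S → ℝ) (hnonneg : ∀ t : S, 0 ≤ c t) {y z : S}
    (h : z * y = z) : lrbLam c y ≤ lrbLam c z := by
  refine Finset.sum_le_sum_of_subset_of_nonneg ?_ (fun t _ _ => hnonneg t)
  intro t ht
  simp only [mem_filter, mem_univ, true_and] at ht ⊢
  calc z * t = z * y * t := by rw [h]
    _ = z * (y * t) := by rw [mul_assoc]
    _ = z := by rw [ht, h]

theorem lrbLam_gap (idem : ∀ x : S, x * x = x) (lrb : ∀ x y : S, x * y * x = x * y)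
    (c : S → ℝ) (hnonneg : ∀ t : S, 0 ≤ c t) {y t : S}
    (hne : y * t ≠ y) : lrbLam c y + c t ≤ lrbLam c (y * t) := by
  have htin : (y * t) * t = y * t := by rw [mul_assoc, idem]
  have htnot : t ∉ univ.filter (fun s => y * s = y) := by
    simp only [mem_filter, mem_univ, true_and]; exact hne
  have key : lrbLam c y + c t =
      ∑ s ∈ insert t (univ.filter (fun s => y * s = y)), c s := by
    rw [Finset.sum_insert htnot, lrbLam, add_comm]
  rw [key]
  refine Finset.sum_le_sum_of_subset_of_nonneg ?_ (fun s _ _ => hnonneg s)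
  intro s hs
  simp only [mem_insert, mem_filter, mem_univ, true_and] at hs ⊢
  rcases hs with rfl | hs
  · exact htin
  · exact lrb_trans hs (lrb y t)

/-- Key step: `single y 1 * (w - λ_y) = Σ_{t : y*t ≠ y} single (y*t) (c t)`. -/
theorem lrb_step (c : S → ℝ) (w : MonoidAlgebra ℝ S)
    (hw : w = ∑ t : S, MonoidAlgebra.single t (c t)) (y : S) :
    MonoidAlgebra.single y (1 : ℝ) * (w - algebraMap ℝ (MonoidAlgebra ℝ S) (lrbLam c y)) =
      ∑ t ∈ univ.filter (fun t => ¬ (y * t = y)), MonoidAlgebra.single (y * t) (c t) := by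
  have h1 : MonoidAlgebra.single y (1 : ℝ) * w
      = ∑ t : S, MonoidAlgebra.single (y * t) (c t) := by
    rw [hw, Finset.mul_sum]
    refine Finset.sum_congr rfl fun t _ => ?_
    rw [MonoidAlgebra.single_mul_single, one_mul]
  have h2 : MonoidAlgebra.single y (1 : ℝ) * algebraMap ℝ (MonoidAlgebra ℝ S) (lrbLam c y)
      = MonoidAlgebra.single y (lrbLam c y) := by
    rw [MonoidAlgebra.coe_algebraMap]
    simp only [Function.comp_apply, Algebra.algebraMap_self, RingHom.id_apply]
    rw [MonoidAlgebra.single_mul_single, mul_one, one_mul]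
  rw [mul_sub, h1, h2]
  rw [← Finset.sum_filter_add_sum_filter_not univ (fun t => y * t = y)
    (fun t => MonoidAlgebra.single (y * t) (c t))]
  have h3 : ∑ t ∈ univ.filter (fun t => y * t = y), MonoidAlgebra.single (y * t) (c t)
      = MonoidAlgebra.single y (lrbLam c y) := by
    calc ∑ t ∈ univ.filter (fun t => y * t = y), MonoidAlgebra.single (y * t) (c t)
        = ∑ t ∈ univ.filter (fun t => y * t = y), c t • MonoidAlgebra.single y (1 : ℝ) := by
          refine Finset.sum_congr rfl fun t ht => ?_
          simp only [mem_filter, mem_univ, true_and] at ht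
          rw [ht, MonoidAlgebra.smul_single', mul_one]
      _ = (∑ t ∈ univ.filter (fun t => y * t = y), c t) • MonoidAlgebra.single y (1 : ℝ) := by
          rw [Finset.sum_smul]
      _ = MonoidAlgebra.single y (lrbLam c y) := by
          rw [MonoidAlgebra.smul_single', mul_one, lrbLam]
  rw [h3, add_sub_cancel_left]



theorem lrb_induct (idem : ∀ x : S, x * x = x) (lrb : ∀ x y : S, x * y * x = x * y)
    (c : S → ℝ) (hnonneg : ∀ t : S, 0 ≤ c t) (w : MonoidAlgebra ℝ S)
    (hw : w = ∑ t : S, MonoidAlgebra.single t (c t)) :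
    ∀ (n : ℕ) (y : S), (univ.filter (fun z : S => z * y = z)).card ≤ n →
      MonoidAlgebra.single y (1 : ℝ) * aeval w (lrbPoly c y) = 0 := by
  intro n
  induction n with
  | zero =>
    intro y hy
    exfalso
    have hyy : y ∈ univ.filter (fun z : S => z * y = z) := by
      simp only [mem_filter, mem_univ, true_and]; exact idem y
    have := Finset.card_pos.mpr ⟨y, hyy⟩
    omega
  | succ n ih =>
    intro y hy
    have hyy : y ∈ univ.filter (fun z : S => z * y = z) := by
      simp only [mem_filter, mem_univ, true_and]; exact idem y
    have hmem : lrbLam c y ∈ lrbLamSet c y := Finset.mem_image_of_mem _ hyy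
    have hsplit : lrbPoly c y
        = (X - C (lrbLam c y)) * ∏ l ∈ (lrbLamSet c y).erase (lrbLam c y), (X - C l) :=
      (Finset.mul_prod_erase _ _ hmem).symm
    have haev : aeval w (X - C (lrbLam c y))
        = w - algebraMap ℝ (MonoidAlgebra ℝ S) (lrbLam c y) := by
      rw [map_sub, aeval_X, aeval_C]
    rw [hsplit, map_mul, haev, ← mul_assoc, lrb_step c w hw y, Finset.sum_mul]
    refine Finset.sum_eq_zero fun t ht => ?_
    simp only [mem_filter, mem_univ, true_and] at ht
    rcases eq_or_lt_of_le (hnonneg t) with hc0 | hcpos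
    · rw [← hc0, MonoidAlgebra.single_zero, zero_mul]
    set z := y * t with hz
    have hzy : z * y = z := lrb y t
    have hyz : y * z = z := by rw [hz, ← mul_assoc, idem]
    have hsub0 : (univ.filter (fun z' : S => z' * z = z'))
        ⊆ univ.filter (fun z' : S => z' * y = z') := by
      intro z' h
      simp only [mem_filter, mem_univ, true_and] at h ⊢
      exact lrb_trans hzy h
    have hynot : y ∉ univ.filter (fun z' : S => z' * z = z') := by
      simp only [mem_filter, mem_univ, true_and]
      intro h
      have hzeq : z = y := hyz.symm.trans h
      rw [hz] at hzeq
      exact ht hzeq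
    have hcard : (univ.filter (fun z' : S => z' * z = z')).card
        < (univ.filter (fun z' : S => z' * y = z')).card :=
      Finset.card_lt_card ((Finset.ssubset_iff_of_subset hsub0).mpr ⟨y, hyy, hynot⟩)
    have h0 : MonoidAlgebra.single z (1 : ℝ) * aeval w (lrbPoly c z) = 0 :=
      ih z (by omega)
    have hLsub : lrbLamSet c z ⊆ (lrbLamSet c y).erase (lrbLam c y) := by
      intro l hl
      rw [lrbLamSet, Finset.mem_image] at hl
      obtain ⟨z', hz', rfl⟩ := hl
      rw [Finset.mem_erase]
      constructor
      · have h1 : lrbLam c y + c t ≤ lrbLam c z := lrbLam_gap idem lrb c hnonneg ht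
        have h2 : lrbLam c z ≤ lrbLam c z' := by
          refine lrbLam_mono c hnonneg ?_
          simp only [mem_filter, mem_univ, true_and] at hz'
          exact hz'
        intro heq
        rw [heq] at h2
        linarith
      · exact Finset.mem_image_of_mem _ (hsub0 hz')
    have hQ : ∏ l ∈ (lrbLamSet c y).erase (lrbLam c y), (X - C l)
        = lrbPoly c z * ∏ l ∈ (lrbLamSet c y).erase (lrbLam c y) \ lrbLamSet c z,
            (X - C l) := by
      rw [lrbPoly, mul_comm, Finset.prod_sdiff hLsub]
    have hsm : MonoidAlgebra.single z (c t)
        = c t • MonoidAlgebra.single z (1 : ℝ) := by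
      rw [MonoidAlgebra.smul_single', mul_one]
    rw [hQ, map_mul, ← mul_assoc, hsm, smul_mul_assoc, h0, smul_zero, zero_mul]

end LRBAux

theorem stmt_8 {S : Type*} [Monoid S] [Fintype S]
    (idem : ∀ x : S, x * x = x) (lrb : ∀ x y : S, x * y * x = x * y)
    (c : S → ℝ) (hnonneg : ∀ t : S, 0 ≤ c t) (hsum : ∑ t : S, c t = 1)
    (w : MonoidAlgebra ℝ S) (hw : w = ∑ t : S, MonoidAlgebra.single t (c t)) :
    ((minpoly ℝ w).map (RingHom.id ℝ)).Splits ∧ (minpoly ℝ w).roots.Nodup ∧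
      IsSemisimpleRing (Algebra.adjoin ℝ ({w} : Set (MonoidAlgebra ℝ S))) := by
  classical
  have key : Polynomial.aeval w (lrbPoly c 1) = 0 := by
    have h := lrb_induct idem lrb c hnonneg w hw
      ((Finset.univ.filter (fun z : S => z * (1 : S) = z)).card) 1 le_rfl
    rwa [← MonoidAlgebra.one_def, one_mul] at h
  set p := lrbPoly c 1 with hp
  have hmonic : p.Monic :=
    Polynomial.monic_prod_of_monic _ _ fun l _ => Polynomial.monic_X_sub_C l
  have hpne : p ≠ 0 := hmonic.ne_zero
  have hdvd : minpoly ℝ w ∣ p := minpoly.dvd ℝ w key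
  have hsplits_p : p.Splits :=
    Polynomial.Splits.prod fun l _ => Polynomial.Splits.X_sub_C _
  have hsplits : ((minpoly ℝ w).map (RingHom.id ℝ)).Splits := by
    rw [Polynomial.map_id]; exact hsplits_p.of_dvd hpne hdvd
  have hroots_p : p.roots = (lrbLamSet c 1).val :=
    Polynomial.roots_prod_X_sub_C _
  have hnodup : (minpoly ℝ w).roots.Nodup :=
    Multiset.nodup_of_le (Polynomial.roots.le_of_dvd hpne hdvd)
      (hroots_p ▸ (lrbLamSet c 1).nodup)
  have hsep : p.Separable :=
    (Polynomial.separable_prod_X_sub_C_iff' (f := id)).mpr fun x _ y _ h => h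
  have hsq : Squarefree p := hsep.squarefree
  have hsqmin : Squarefree (minpoly ℝ w) := hsq.squarefree_of_dvd hdvd
  refine ⟨hsplits, hnodup, ?_⟩
  letI : CommRing (Algebra.adjoin ℝ ({w} : Set (MonoidAlgebra ℝ S))) :=
    Algebra.adjoinCommRingOfComm ℝ (by
      rintro a ha b hb
      rw [Set.mem_singleton_iff] at ha hb
      rw [ha, hb])
  haveI hfd : FiniteDimensional ℝ (MonoidAlgebra ℝ S) :=
    Module.Finite.equiv ((MonoidAlgebra.coeffLinearEquiv (R := ℝ)).trans (Finsupp.linearEquivFunOnFinite ℝ ℝ S)).symm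
  haveI hfdA : FiniteDimensional ℝ (Algebra.adjoin ℝ ({w} : Set (MonoidAlgebra ℝ S))) :=
    inferInstance
  haveI : IsArtinianRing (Algebra.adjoin ℝ ({w} : Set (MonoidAlgebra ℝ S))) :=
    IsArtinianRing.of_finite ℝ _
  haveI : IsReduced (Algebra.adjoin ℝ ({w} : Set (MonoidAlgebra ℝ S))) := by
    refine ⟨fun x hx => ?_⟩
    obtain ⟨n, hn⟩ := hx
    obtain ⟨a, ha⟩ := x
    have hamem : a ∈ Algebra.adjoin ℝ ({w} : Set (MonoidAlgebra ℝ S)) := ha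
    rw [Algebra.adjoin_singleton_eq_range_aeval, AlgHom.mem_range] at hamem
    obtain ⟨q, hq⟩ := hamem
    have hcoe : a ^ n = 0 := by
      have h2 := congrArg (Subalgebra.val _) hn
      simpa using h2
    have hpow : Polynomial.aeval w (q ^ n) = 0 := by rw [map_pow, hq, hcoe]
    have hdq : minpoly ℝ w ∣ q := hsqmin.isRadical n q (minpoly.dvd ℝ w hpow)
    obtain ⟨r, hr⟩ := hdq
    apply Subtype.ext
    show a = _
    rw [← hq, hr, map_mul, minpoly.aeval, zero_mul]
    rfl
  exact IsArtinianRing.isSemisimpleRing_of_isReduced _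
end

section
/- Let S be a finite left regular band with identity, k a field, w = Σ_t w_t t ∈ kS with λ_X = Σ_{σ(t)≥X} w_t, and suppose σ(s) is the minimum element of the lattice L of principal left ideals (i.e., Ss ⊆ St for all t ∈ S). Then s·w = λ_{σ(s)}·s in kS; in particular s·(w − λ_{σ(s)}) = 0. -/
open Classical in
theorem stmt_11 {S : Type*} [Monoid S] [Fintype S]
    (idem : ∀ x : S, x * x = x) (lrb : ∀ x y : S, x * y * x = x * y)
    (k : Type*) [Field k] (c : S → k)
    (w : MonoidAlgebra k S) (hw : w = ∑ t : S, MonoidAlgebra.single t (c t))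
    (lam : S → k)
    (hlam : ∀ x : S,
      lam x = ∑ t ∈ Finset.univ.filter (fun t : S => leftIdeal x ⊆ leftIdeal t), c t)
    (s : S) (hmin : ∀ t : S, leftIdeal s ⊆ leftIdeal t) :
    MonoidAlgebra.single s (1 : k) * w = lam s • MonoidAlgebra.single s (1 : k) ∧
    MonoidAlgebra.single s (1 : k) *
      (w - algebraMap k (MonoidAlgebra k S) (lam s)) = 0 := by
  have hst : ∀ t : S, s * t = s := by
    intro t
    obtain ⟨u, hu⟩ := hmin t ⟨1, (one_mul s).symm⟩
    rw [hu, mul_assoc, idem]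
  have hlam' : lam s = ∑ t : S, c t := by
    rw [hlam, Finset.filter_true_of_mem (fun t _ => hmin t)]
  have h1 : MonoidAlgebra.single s (1 : k) * w = lam s • MonoidAlgebra.single s 1 := by
    rw [hw, Finset.mul_sum]
    have : ∀ t : S, MonoidAlgebra.single s (1 : k) * MonoidAlgebra.single t (c t)
        = MonoidAlgebra.single s (c t) := by
      intro t
      rw [MonoidAlgebra.single_mul_single, hst, one_mul]
    simp only [this, hlam', Finsupp.smul_single, smul_eq_mul, mul_one]
    rw [MonoidAlgebra.smul_single', mul_one]
    exact (map_sum (MonoidAlgebra.singleAddHom s) c Finset.univ).symm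
  refine ⟨h1, ?_⟩
  rw [mul_sub, h1, Algebra.algebraMap_eq_smul_one, mul_smul_comm, mul_one, sub_self]
end
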